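/- For any finite commutative ring R with identity 1 ≠ 0, the probability that two elements chosen uniformly at random (with replacement) have product zero is at most 3/4, i.e., |{(x,y) ∈ R × R : xy = 0}| ≤ (3/4)·|R|². -/
import Mathlib

open Finset

lemma key (R : Type*) [CommRing R] [Fintype R] [DecidableEq R] (x : R) (hx : x ≠ 0) :
    2 * (Finset.univ.filter fun y : R => x * y = 0).card ≤ Fintype.card R := by
  set S : AddSubgroup R :=
    { carrier := {y | x * y = 0}
      zero_mem' := by simp
      add_mem' := by intro a b ha hb; simp_all [mul_add]
      neg_mem' := by intro a ha; simp_all } with hS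
  haveI : Fintype S := Fintype.ofFinite S
  have hcard : (Finset.univ.filter fun y : R => x * y = 0).card = Nat.card S := by
    rw [Nat.card_eq_fintype_card]
    calc (Finset.univ.filter fun y : R => x * y = 0).card
        = Fintype.card {y : R // x * y = 0} := (Fintype.card_subtype _).symm
      _ = Fintype.card S := Fintype.card_congr (Equiv.subtypeEquivRight (fun y => Iff.rfl))
  have hdvd : Nat.card S ∣ Nat.card R := AddSubgroup.card_addSubgroup_dvd_card S
  rw [hcard]
  obtain ⟨k, hk⟩ := hdvd
  have hSne : S ≠ ⊤ := by
    intro h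
    have h1 : (1 : R) ∈ S := h ▸ AddSubgroup.mem_top 1
    have : x * 1 = 0 := h1
    exact hx (by simpa using this)
  have hne : Nat.card S ≠ Nat.card R := by
    intro h
    exact hSne ((AddSubgroup.card_eq_iff_eq_top S).mp h)
  have hSpos : 0 < Nat.card S := Nat.card_pos
  rw [Nat.card_eq_fintype_card] at hk
  have hk2 : 2 ≤ k := by
    by_contra h
    interval_cases k <;> simp_all [Nat.card_eq_fintype_card]
  calc 2 * Nat.card S ≤ k * Nat.card S := Nat.mul_le_mul_right _ hk2
    _ = Fintype.card R := by rw [hk, Nat.mul_comm]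

theorem stmt_2 (R : Type*) [CommRing R] [Fintype R] [Nontrivial R] [DecidableEq R] :
    4 * (Finset.univ.filter fun p : R × R => p.1 * p.2 = 0).card ≤ 3 * (Fintype.card R) ^ 2 := by
  set n := Fintype.card R with hn
  have hsplit : (Finset.univ.filter fun p : R × R => p.1 * p.2 = 0).card
      = ∑ x : R, (Finset.univ.filter fun y : R => x * y = 0).card := by
    rw [Finset.card_eq_sum_card_fiberwise (f := Prod.fst) (t := Finset.univ) (fun _ _ => Finset.mem_univ _)]
    refine Finset.sum_congr rfl fun x _ => ?_
    refine Finset.card_bij (fun p _ => p.2) ?_ ?_ ?_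
    · intro p hp
      simp only [Finset.mem_filter, Finset.mem_univ, true_and] at hp ⊢
      rw [← hp.2]; exact hp.1
    · intro p hp q hq h
      simp only [Finset.mem_filter, Finset.mem_univ, true_and] at hp hq
      exact Prod.ext (hp.2.trans hq.2.symm) h
    · intro y hy
      simp only [Finset.mem_filter, Finset.mem_univ, true_and] at hy
      exact ⟨(x, y), by simp [hy], rfl⟩
  rw [hsplit]
  have h0 : (Finset.univ.filter fun y : R => (0:R) * y = 0).card = n := by
    simp [Finset.filter_true_of_mem, hn]
  have hsum : ∑ x : R, (Finset.univ.filter fun y : R => x * y = 0).card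
      = n + ∑ x ∈ Finset.univ.erase 0, (Finset.univ.filter fun y : R => x * y = 0).card := by
    rw [← Finset.add_sum_erase _ _ (Finset.mem_univ (0:R)), h0]
  rw [hsum]
  have hbound : 2 * ∑ x ∈ Finset.univ.erase 0, (Finset.univ.filter fun y : R => x * y = 0).card
      ≤ (n - 1) * n := by
    calc 2 * ∑ x ∈ Finset.univ.erase 0, (Finset.univ.filter fun y : R => x * y = 0).card
        = ∑ x ∈ Finset.univ.erase 0, 2 * (Finset.univ.filter fun y : R => x * y = 0).card := by
          rw [Finset.mul_sum]
      _ ≤ ∑ x ∈ Finset.univ.erase 0, n :=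
          Finset.sum_le_sum fun x hx => key R x (Finset.mem_erase.mp hx).1
      _ = (n - 1) * n := by
          rw [Finset.sum_const, smul_eq_mul, Finset.card_erase_of_mem (Finset.mem_univ _),
            Finset.card_univ]
  have hn2 : 2 ≤ n := Fintype.one_lt_card
  obtain ⟨m, hm⟩ : ∃ m, n = m + 2 := ⟨n - 2, by omega⟩
  rw [hm] at hbound ⊢
  have hsub : m + 2 - 1 = m + 1 := by omega
  rw [hsub] at hbound
  nlinarith [hbound]
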